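/- Assume α(x) < 0 for all x > 0, α(x) = α∞ and δ(x) = δ∞ for all x ≥ H with α∞ < 0 and α∞² − δ∞² > 0, and 4‖δ‖_∞² H < r. Let V : [0,∞) → ℂ be continuous, twice continuously differentiable on (0,∞), solving −V''(x) + (δ(x)²/α(x) − α(x)) V(x) = 0 for all x > 0, with V(0) = 0, with V' bounded near 0, and exponentially decaying at infinity (there are C, ε > 0 with |V(x)| + |V'(x)| ≤ C e^{−εx} for all x ≥ H). Then V ≡ 0 on [0,∞). In particular there is no such solution with lim_{x→0⁺} V'(x) = iδ(0) when δ(0) ≠ 0. -/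

import Mathlib

set_option maxHeartbeats 1000000

open Complex MeasureTheory intervalIntegral Filter Set

lemma uIccIoi {u v : ℝ} (hu : 0 < u) (hv : 0 < v) : Set.uIcc u v ⊆ Set.Ioi 0 := by
  intro t ht
  rw [Set.mem_uIcc] at ht
  rcases ht with ⟨h1, _⟩ | ⟨h1, _⟩ <;> exact lt_of_lt_of_le (by positivity) h1

lemma cs_interval (f : ℝ → ℝ) (a c : ℝ) (ha : 0 < a) (hac : a ≤ c)
    (hf : ContinuousOn f (Set.Ioi (0:ℝ))) :
    (∫ t in a..c, f t)^2 ≤ (c - a) * ∫ t in a..c, f t ^ 2 := by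
  set G : ℝ → ℝ := fun x => ∫ t in a..x, f t with hG
  set G2 : ℝ → ℝ := fun x => ∫ t in a..x, f t ^ 2 with hG2
  set P : ℝ → ℝ := fun x => (x - a) * G2 x - (G x)^2 with hPdef
  have hf2 : ContinuousOn (fun t => f t ^ 2) (Set.Ioi (0:ℝ)) := hf.pow 2
  have hfi : ∀ x : ℝ, 0 < x → IntervalIntegrable f volume a x :=
    fun x hx => (hf.mono (uIccIoi ha hx)).intervalIntegrable
  have hfi2 : ∀ x : ℝ, 0 < x → IntervalIntegrable (fun t => f t ^ 2) volume a x :=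
    fun x hx => (hf2.mono (uIccIoi ha hx)).intervalIntegrable
  have hGd : ∀ x : ℝ, 0 < x → HasDerivAt G (f x) x := fun x hx =>
    integral_hasDerivAt_right (hfi x hx)
      (hf.stronglyMeasurableAtFilter isOpen_Ioi x hx)
      (hf.continuousAt (Ioi_mem_nhds hx))
  have hG2d : ∀ x : ℝ, 0 < x → HasDerivAt G2 (f x ^ 2) x := fun x hx =>
    integral_hasDerivAt_right (hfi2 x hx)
      (hf2.stronglyMeasurableAtFilter isOpen_Ioi x hx)
      (hf2.continuousAt (Ioi_mem_nhds hx))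
  have hPd : ∀ x : ℝ, 0 < x →
      HasDerivAt P (G2 x + (x - a) * f x ^ 2 - 2 * G x * f x) x := by
    intro x hx
    have h1 := (((hasDerivAt_id x).sub_const a).mul (hG2d x hx)).sub
      ((hGd x hx).pow 2)
    simp only [id_eq, pow_one, Nat.cast_ofNat] at h1
    exact h1.congr_deriv (by ring)
  have hP'nn : ∀ x ∈ Set.Icc a c, 0 ≤ G2 x + (x - a) * f x ^ 2 - 2 * G x * f x := by
    intro x hx
    have hx0 : 0 < x := lt_of_lt_of_le ha hx.1
    have key : ∫ t in a..x, (f t - f x)^2 =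
        G2 x - 2 * G x * f x + (x - a) * f x ^ 2 := by
      have : ∀ t, (f t - f x)^2 = f t ^ 2 - 2 * f x * f t + f x ^ 2 := by intro t; ring
      simp_rw [this]
      rw [intervalIntegral.integral_add (((hfi2 x hx0)).sub
            (((hfi x hx0)).const_mul (2 * f x)))
          intervalIntegrable_const,
        intervalIntegral.integral_sub (hfi2 x hx0) ((hfi x hx0).const_mul (2 * f x)),
        intervalIntegral.integral_const_mul, intervalIntegral.integral_const]
      simp only [smul_eq_mul]
      ring
    have hnn2 : 0 ≤ ∫ t in a..x, (f t - f x)^2 :=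
      intervalIntegral.integral_nonneg hx.1 (fun t _ => sq_nonneg _)
    linarith [key ▸ hnn2]
  have hmono : MonotoneOn P (Set.Icc a c) := by
    apply monotoneOn_of_deriv_nonneg (convex_Icc a c)
    · exact fun x hx => (hPd x (lt_of_lt_of_le ha hx.1)).continuousAt.continuousWithinAt
    · intro x hx
      rw [interior_Icc] at hx
      exact (hPd x (lt_of_lt_of_le ha (le_of_lt hx.1))).differentiableAt.differentiableWithinAt
    · intro x hx
      rw [interior_Icc] at hx
      rw [(hPd x (lt_of_lt_of_le ha (le_of_lt hx.1))).deriv]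
      exact hP'nn x ⟨le_of_lt hx.1, le_of_lt hx.2⟩
  have hPa : P a = 0 := by simp [hPdef, hG, hG2]
  have h := hmono (Set.left_mem_Icc.2 hac) (Set.right_mem_Icc.2 hac) hac
  rw [hPa] at h
  have h' : 0 ≤ (c - a) * G2 c - (G c)^2 := h
  linarith

theorem budden_decaying_solution_vanishes
    (L H r Cδ αi δi : ℝ) (hL : 0 < L) (hH : 0 < H) (hr : 0 < r)
    (α δ : ℝ → ℝ)
    (hα : ContDiffOn ℝ 2 α (Set.Ici (-L)))
    (hαbd : ∃ C, ∀ x, -L ≤ x → |α x| ≤ C)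
    (hα0 : α 0 = 0) (hα'0 : deriv α 0 < 0)
    (hαr : ∀ x ∈ Set.Icc (-L) H, r * |x| ≤ |α x|)
    (hαneg : ∀ x : ℝ, 0 < x → α x < 0)
    (hαinf : ∀ x, H ≤ x → α x = αi) (hαi : αi < 0)
    (hδ : ContDiffOn ℝ 1 δ (Set.Ici (-L)))
    (hδ0 : δ 0 ≠ 0)
    (hδinf : ∀ x, H ≤ x → δ x = δi)
    (hcoerc : δi^2 < αi^2)
    (hCδ : ∀ x, -L ≤ x → |δ x| ≤ Cδ)
    (h5 : 4 * Cδ^2 * H < r)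
    -- the solution V of the Budden-type equation
    (V V' : ℝ → ℂ)
    (hVc : ContinuousOn V (Set.Ici (0:ℝ)))
    (hVd : ∀ x : ℝ, 0 < x → HasDerivAt V (V' x) x)
    (hV'd : ∀ x : ℝ, 0 < x →
      HasDerivAt V' (((δ x^2 / α x - α x : ℝ) : ℂ) * V x) x)
    (hV0 : V 0 = 0)
    (hV'bd : ∃ M ε : ℝ, 0 < ε ∧ ∀ x ∈ Set.Ioo (0:ℝ) ε, ‖V' x‖ ≤ M)
    (hdecay : ∃ C₀ ε₀ : ℝ, 0 < C₀ ∧ 0 < ε₀ ∧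
      ∀ x, H ≤ x → ‖V x‖ + ‖V' x‖ ≤ C₀ * Real.exp (-ε₀ * x)) :
    (∀ x : ℝ, 0 ≤ x → V x = 0)
    ∧ ¬ Filter.Tendsto V' (nhdsWithin 0 (Set.Ioi 0))
        (nhds (Complex.I * (δ 0 : ℂ))) := by
  obtain ⟨M, ε, hε, hM⟩ := hV'bd
  obtain ⟨C₀, ε₀, hC₀, hε₀, hdec⟩ := hdecay
  have hM0 : 0 ≤ M := le_trans (norm_nonneg _)
    (hM (ε/2) ⟨half_pos hε, half_lt_self hε⟩)
  set q : ℝ → ℝ := fun x => δ x ^ 2 / α x - α x with hq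
  set E : ℝ → ℝ := fun x => ‖V' x‖^2 + q x * ‖V x‖^2 with hE
  set F : ℝ → ℝ := fun x => (star (V x) * V' x).re with hF
  -- continuity facts
  have hVcont : ContinuousOn V (Set.Ioi (0:ℝ)) :=
    fun x hx => (hVd x hx).continuousAt.continuousWithinAt
  have hV'cont : ContinuousOn V' (Set.Ioi (0:ℝ)) :=
    fun x hx => (hV'd x hx).continuousAt.continuousWithinAt
  have hW2c : ContinuousOn (fun x => ‖V' x‖^2) (Set.Ioi (0:ℝ)) := (hV'cont.norm).pow 2
  have hWc : ContinuousOn (fun x => ‖V' x‖) (Set.Ioi (0:ℝ)) := hV'cont.norm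
  have hαc : ∀ x : ℝ, 0 < x → ContinuousAt α x := by
    intro x hx
    exact (hα.continuousOn.continuousAt
      (Filter.mem_of_superset (Ioi_mem_nhds (by linarith : -L < x)) Set.Ioi_subset_Ici_self))
  have hδc : ∀ x : ℝ, 0 < x → ContinuousAt δ x := by
    intro x hx
    exact (hδ.continuousOn.continuousAt
      (Filter.mem_of_superset (Ioi_mem_nhds (by linarith : -L < x)) Set.Ioi_subset_Ici_self))
  have hqc : ContinuousOn q (Set.Ioi (0:ℝ)) := by
    intro x hx
    exact ((((hδc x hx).pow 2).div (hαc x hx) (ne_of_lt (hαneg x hx))).sub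
      (hαc x hx)).continuousWithinAt
  have hqV2c : ContinuousOn (fun x => q x * ‖V x‖^2) (Set.Ioi (0:ℝ)) :=
    hqc.mul ((hVcont.norm).pow 2)
  have hEc : ContinuousOn E (Set.Ioi (0:ℝ)) := hW2c.add hqV2c
  -- the energy derivative
  have hFd : ∀ x : ℝ, 0 < x → HasDerivAt F (E x) x := by
    intro x hx
    have h1 := ((hVd x hx).star.mul (hV'd x hx))
    have h2 := Complex.reCLM.hasFDerivAt.comp_hasDerivAt x h1
    refine h2.congr_deriv (Eq.symm ?_)
    show E x = (Complex.reCLM) (star (V' x) * V' x + star (V x) * (((q x : ℝ) : ℂ) * V x))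
    simp only [hE, Complex.reCLM_apply, Complex.star_def, Complex.add_re, Complex.mul_re,
      Complex.mul_im, Complex.conj_re, Complex.conj_im, Complex.ofReal_re, Complex.ofReal_im,
      Complex.sq_norm, Complex.normSq_apply]
    ring
  -- various integrability
  have hEint : ∀ u v : ℝ, 0 < u → 0 < v → IntervalIntegrable E volume u v :=
    fun u v hu hv => (hEc.mono (uIccIoi hu hv)).intervalIntegrable
  have hW2int : ∀ u v : ℝ, 0 < u → 0 < v →
      IntervalIntegrable (fun x => ‖V' x‖^2) volume u v :=
    fun u v hu hv => (hW2c.mono (uIccIoi hu hv)).intervalIntegrable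
  have hWint : ∀ u v : ℝ, 0 < u → 0 < v →
      IntervalIntegrable (fun x => ‖V' x‖) volume u v :=
    fun u v hu hv => (hWc.mono (uIccIoi hu hv)).intervalIntegrable
  have hqV2int : ∀ u v : ℝ, 0 < u → 0 < v →
      IntervalIntegrable (fun x => q x * ‖V x‖^2) volume u v :=
    fun u v hu hv => (hqV2c.mono (uIccIoi hu hv)).intervalIntegrable
  have hV'int : ∀ u v : ℝ, 0 < u → 0 < v → IntervalIntegrable V' volume u v :=
    fun u v hu hv => (hV'cont.mono (uIccIoi hu hv)).intervalIntegrable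
  -- FTC for V
  have hFTCV : ∀ u v : ℝ, 0 < u → u ≤ v → (∫ t in u..v, V' t) = V v - V u := by
    intro u v hu huv
    apply intervalIntegral.integral_eq_sub_of_hasDerivAt
    · intro x hx
      rw [Set.uIcc_of_le huv] at hx
      exact hVd x (lt_of_lt_of_le hu hx.1)
    · exact hV'int u v hu (lt_of_lt_of_le hu huv)
  -- upper bound on ‖V x‖
  have hVub : ∀ a x : ℝ, 0 < a → a ≤ x →
      ‖V x‖ ≤ ‖V a‖ + ∫ t in a..x, ‖V' t‖ := by
    intro a x ha hax
    have h1 : V x = V a + (V x - V a) := by ring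
    calc ‖V x‖ = ‖V a + (V x - V a)‖ := by rw [← h1]
      _ ≤ ‖V a‖ + ‖V x - V a‖ := norm_add_le _ _
      _ ≤ ‖V a‖ + ∫ t in a..x, ‖V' t‖ := by
          gcongr
          rw [← hFTCV a x ha hax]
          exact intervalIntegral.norm_integral_le_integral_norm hax
  -- V small near zero
  have hVa : ∀ a : ℝ, 0 < a → a < ε → ‖V a‖ ≤ M * a := by
    intro a ha haε
    have hev : ∀ᶠ t in nhdsWithin (0:ℝ) (Set.Ioi 0),
        ‖V a - V t‖ ≤ M * (a - t) := by
      filter_upwards [Ioo_mem_nhdsGT_of_mem (Set.left_mem_Ico.2 ha)] with t ht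
      have h1 : (∫ s in t..a, V' s) = V a - V t := hFTCV t a ht.1 (le_of_lt ht.2)
      rw [← h1]
      have h2 := intervalIntegral.norm_integral_le_of_norm_le_const
        (f := V') (a := t) (b := a) (C := M) ?_
      · rwa [_root_.abs_of_nonneg (sub_nonneg.2 (le_of_lt ht.2))] at h2
      · intro x hx
        rw [Set.uIoc_of_le (le_of_lt ht.2)] at hx
        exact hM x ⟨lt_trans ht.1 hx.1, lt_of_le_of_lt hx.2 haε⟩
    have hlim1 : Filter.Tendsto (fun t => ‖V a - V t‖)
        (nhdsWithin (0:ℝ) (Set.Ioi 0)) (nhds ‖V a‖) := by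
      have hV0' : Filter.Tendsto V (nhdsWithin (0:ℝ) (Set.Ioi 0)) (nhds 0) := by
        have := (hVc 0 (Set.self_mem_Ici)).mono (Set.Ioi_subset_Ici_self (a := (0:ℝ)))
        rw [ContinuousWithinAt, hV0] at this
        exact this
      have := (tendsto_const_nhds (x := V a)).sub hV0'
      simpa using this.norm
    have hlim2 : Filter.Tendsto (fun t : ℝ => M * (a - t))
        (nhdsWithin (0:ℝ) (Set.Ioi 0)) (nhds (M * a)) := by
      have : Filter.Tendsto (fun t : ℝ => M * (a - t)) (nhds 0) (nhds (M * (a - 0))) :=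
        (Continuous.tendsto (by continuity) 0)
      simpa using this.mono_left nhdsWithin_le_nhds
    exact le_of_tendsto_of_tendsto hlim1 hlim2 hev
  -- FTC for F
  have hFTC : ∀ a b : ℝ, 0 < a → a ≤ b → (∫ x in a..b, E x) = F b - F a := by
    intro a b ha hab
    apply intervalIntegral.integral_eq_sub_of_hasDerivAt
    · intro x hx
      rw [Set.uIcc_of_le hab] at hx
      exact hFd x (lt_of_lt_of_le ha hx.1)
    · exact hEint a b ha (lt_of_lt_of_le ha hab)
  -- main energy estimate
  have hmain : ∀ a b : ℝ, 0 < a → a < ε → a < H → H ≤ b →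
      (∫ x in a..b, ‖V' x‖^2) ≤ 2*(F b - F a) + M^2 * a := by
    intro a b ha haε haH hHb
    have hb : 0 < b := lt_of_lt_of_le hH hHb
    have haH' : a ≤ H := le_of_lt haH
    have hab : a ≤ b := le_trans haH' hHb
    set I : ℝ := ∫ x in a..b, ‖V' x‖^2 with hIdef
    have hI0 : 0 ≤ I := intervalIntegral.integral_nonneg hab (fun t _ => sq_nonneg _)
    have hsplitI : (∫ x in a..H, ‖V' x‖^2) + (∫ x in H..b, ‖V' x‖^2) = I :=
      intervalIntegral.integral_add_adjacent_intervals (hW2int a H ha hH) (hW2int H b hH hb)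
    have hgle : ∀ x : ℝ, a ≤ x → x ≤ b → (∫ t in a..x, ‖V' t‖^2) ≤ I := by
      intro x hax hxb
      have hx0 : 0 < x := lt_of_lt_of_le ha hax
      have h1 := intervalIntegral.integral_add_adjacent_intervals
        (hW2int a x ha hx0) (hW2int x b hx0 hb)
      have h2 : 0 ≤ ∫ t in x..b, ‖V' t‖^2 :=
        intervalIntegral.integral_nonneg hxb (fun t _ => sq_nonneg _)
      linarith [h1]
    have hVsq : ∀ x ∈ Set.Icc a H, ‖V x‖^2 ≤ 2*M^2*a^2 + 2*x*I := by
      intro x hx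
      have hx0 : 0 < x := lt_of_lt_of_le ha hx.1
      have h1 : ‖V x‖ ≤ M*a + ∫ t in a..x, ‖V' t‖ := by
        have h2 := hVub a x ha hx.1
        have h3 := hVa a ha haε
        linarith
      have hs0 : 0 ≤ ∫ t in a..x, ‖V' t‖ :=
        intervalIntegral.integral_nonneg hx.1 (fun t _ => norm_nonneg _)
      have hcs := cs_interval (fun t => ‖V' t‖) a x ha hx.1 hWc
      have h3 : (∫ t in a..x, ‖V' t‖)^2 ≤ (x - a)*I := by
        refine le_trans hcs ?_
        have h4 := hgle x hx.1 (le_trans hx.2 hHb)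
        have h5 : 0 ≤ x - a := sub_nonneg.2 hx.1
        nlinarith
      set s : ℝ := ∫ t in a..x, ‖V' t‖ with hsdef
      have h6 : ‖V x‖^2 ≤ (M*a + s)^2 := by
        apply pow_le_pow_left₀ (norm_nonneg (V x)) h1
      have h7 : (M*a + s)^2 ≤ 2*(M*a)^2 + 2*s^2 := by nlinarith [sq_nonneg (M*a - s)]
      have h8 : 2*s^2 ≤ 2*(x-a)*I := by linarith
      have h9 : 2*(x-a)*I ≤ 2*x*I := by nlinarith [mul_nonneg (le_of_lt ha) hI0]
      calc ‖V x‖^2 ≤ 2*(M*a)^2 + 2*s^2 := le_trans h6 h7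
        _ ≤ 2*M^2*a^2 + 2*x*I := by nlinarith
    have hqlb : ∀ x ∈ Set.Icc a H, -(Cδ^2/(r*x)) ≤ q x := by
      intro x hx
      have hx0 : 0 < x := lt_of_lt_of_le ha hx.1
      have hαx : α x < 0 := hαneg x hx0
      have hrx : r * x ≤ -α x := by
        have h1 := hαr x ⟨by linarith, hx.2⟩
        rwa [abs_of_pos hx0, abs_of_neg hαx] at h1
      have hδ2 : δ x ^2 ≤ Cδ^2 := by
        have h1 := hCδ x (by linarith)
        nlinarith [abs_nonneg (δ x), _root_.sq_abs (δ x)]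
      have hdiv : δ x ^2 / (-α x) ≤ Cδ^2/(r*x) :=
        div_le_div₀ (by positivity) hδ2 (by positivity) hrx
      have heq : δ x ^2 / α x = -(δ x^2 / (-α x)) := by
        rw [div_neg, neg_neg]
      have : -(Cδ^2/(r*x)) ≤ δ x ^ 2 / α x - α x := by
        rw [heq]; linarith
      exact this
    have hqV2lb : ∀ x ∈ Set.Icc a H,
        -((Cδ^2/r) * (2*M^2*a + 2*I)) ≤ q x * ‖V x‖^2 := by
      intro x hx
      have hx0 : 0 < x := lt_of_lt_of_le ha hx.1
      have h1 := hqlb x hx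
      have h2 := hVsq x hx
      have hc : (0:ℝ) ≤ Cδ^2/(r*x) := by positivity
      have step1 : -(Cδ^2/(r*x)) * ‖V x‖^2 ≤ q x * ‖V x‖^2 :=
        mul_le_mul_of_nonneg_right h1 (sq_nonneg _)
      have step2 : (Cδ^2/(r*x)) * ‖V x‖^2 ≤ (Cδ^2/(r*x)) * (2*M^2*a^2 + 2*x*I) :=
        mul_le_mul_of_nonneg_left h2 hc
      have step3 : (Cδ^2/(r*x)) * (2*M^2*a^2 + 2*x*I) ≤ (Cδ^2/r) * (2*M^2*a + 2*I) := by
        rw [div_mul_eq_mul_div, div_mul_eq_mul_div, div_le_div_iff₀ (by positivity) hr]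
        nlinarith [mul_nonneg (mul_nonneg (sq_nonneg Cδ) (sq_nonneg M))
          (mul_nonneg (le_of_lt ha) (sub_nonneg.2 hx.1)), hr.le,
          mul_nonneg (mul_nonneg (sq_nonneg Cδ) hI0) (sub_nonneg.2 hx.1)]
      linarith
    have hIq : -((H - a) * ((Cδ^2/r) * (2*M^2*a + 2*I))) ≤ ∫ x in a..H, q x * ‖V x‖^2 := by
      have h1 := intervalIntegral.integral_mono_on haH'
        (_root_.intervalIntegrable_const (c := -((Cδ^2/r) * (2*M^2*a + 2*I))))
        (hqV2int a H ha hH) hqV2lb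
      rw [intervalIntegral.integral_const, smul_eq_mul] at h1
      linarith
    have hq0b : ∀ x ∈ Set.Icc H b, ‖V' x‖^2 ≤ E x := by
      intro x hx
      have hq0 : 0 ≤ q x := by
        show 0 ≤ δ x ^ 2 / α x - α x
        rw [hαinf x hx.1, hδinf x hx.1]
        have h1 : δi^2 - αi^2 ≤ 0 := by linarith
        have h2 : δi ^2/αi - αi = (δi^2 - αi^2)/αi := by
          field_simp [ne_of_lt hαi]
        rw [h2]
        exact div_nonneg_iff.2 (Or.inr ⟨h1, le_of_lt hαi⟩)
      have h3 := mul_nonneg hq0 (sq_nonneg ‖V x‖)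
      show ‖V' x‖^2 ≤ ‖V' x‖^2 + q x * ‖V x‖^2
      linarith
    have hEHb : (∫ x in H..b, ‖V' x‖^2) ≤ ∫ x in H..b, E x :=
      intervalIntegral.integral_mono_on hHb (hW2int H b hH hb) (hEint H b hH hb) hq0b
    have hsplitE : (∫ x in a..H, E x) + (∫ x in H..b, E x) = ∫ x in a..b, E x :=
      intervalIntegral.integral_add_adjacent_intervals (hEint a H ha hH) (hEint H b hH hb)
    have hEaH : (∫ x in a..H, E x)
        = (∫ x in a..H, ‖V' x‖^2) + ∫ x in a..H, q x*‖V x‖^2 :=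
      intervalIntegral.integral_add (hW2int a H ha hH) (hqV2int a H ha hH)
    have hFTCab := hFTC a b ha hab
    set c : ℝ := Cδ^2*H/r with hcdef
    have hc4 : 4*c < 1 := by
      rw [hcdef]
      have h1 : 4*(Cδ^2*H/r) = (4*Cδ^2*H)/r := by ring
      rw [h1, div_lt_one hr]
      exact h5
    have hK0 : 0 ≤ (Cδ^2/r) * (2*M^2*a + 2*I) := by
      apply mul_nonneg (by positivity)
      have h1 : (0:ℝ) ≤ M^2*a := by positivity
      linarith
    have hHK : H * ((Cδ^2/r) * (2*M^2*a + 2*I)) = c * (2*M^2*a + 2*I) := by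
      rw [hcdef]; ring
    have hHaK : (H - a) * ((Cδ^2/r) * (2*M^2*a + 2*I))
        ≤ H * ((Cδ^2/r) * (2*M^2*a + 2*I)) :=
      mul_le_mul_of_nonneg_right (by linarith) hK0
    have hMa0 : (0:ℝ) ≤ M^2*a := by positivity
    have h1 : 0 ≤ (1 - 4*c) * I := mul_nonneg (by linarith) hI0
    have h2 : 0 ≤ (1 - 4*c) * (M^2*a) := mul_nonneg (by linarith) hMa0
    nlinarith [hFTCab, hsplitE, hEaH, hEHb, hIq, hsplitI, hHaK, hHK]
  -- limit of F at 0⁺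
  have hV0' : Filter.Tendsto V (nhdsWithin (0:ℝ) (Set.Ioi 0)) (nhds 0) := by
    have h := (hVc 0 (Set.self_mem_Ici)).mono (Set.Ioi_subset_Ici_self (a := (0:ℝ)))
    rw [ContinuousWithinAt, hV0] at h
    exact h
  have hFa0 : Filter.Tendsto F (nhdsWithin (0:ℝ) (Set.Ioi 0)) (nhds 0) := by
    apply squeeze_zero_norm' (a := fun t => ‖V t‖ * M)
    · filter_upwards [Ioo_mem_nhdsGT_of_mem (Set.left_mem_Ico.2 hε)] with t ht
      calc ‖F t‖ = |(star (V t) * V' t).re| := rfl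
        _ ≤ ‖star (V t) * V' t‖ := Complex.abs_re_le_norm _
        _ = ‖V t‖ * ‖V' t‖ := by rw [norm_mul, norm_star]
        _ ≤ ‖V t‖ * M := mul_le_mul_of_nonneg_left (hM t ht) (norm_nonneg _)
    · have h := hV0'.norm.mul_const M
      simpa using h
  -- limit of F at infinity
  have hFb0 : Filter.Tendsto F Filter.atTop (nhds 0) := by
    apply squeeze_zero_norm' (a := fun b => (C₀ * Real.exp (-ε₀ * b))^2)
    · filter_upwards [Filter.eventually_ge_atTop H] with b hb
      have hd := hdec b hb
      have h1 : ‖V b‖ ≤ C₀ * Real.exp (-ε₀*b) := by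
        have := norm_nonneg (V' b); linarith
      have h2 : ‖V' b‖ ≤ C₀ * Real.exp (-ε₀*b) := by
        have := norm_nonneg (V b); linarith
      calc ‖F b‖ = |(star (V b) * V' b).re| := rfl
        _ ≤ ‖star (V b) * V' b‖ := Complex.abs_re_le_norm _
        _ = ‖V b‖ * ‖V' b‖ := by rw [norm_mul, norm_star]
        _ ≤ (C₀ * Real.exp (-ε₀*b))^2 := by
            nlinarith [norm_nonneg (V b), norm_nonneg (V' b)]
    · have h1 : Filter.Tendsto (fun b:ℝ => ε₀ * b) Filter.atTop Filter.atTop :=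
        Filter.Tendsto.const_mul_atTop hε₀ tendsto_id
      have h2 : Filter.Tendsto (fun b:ℝ => Real.exp (-(ε₀*b))) Filter.atTop (nhds 0) :=
        Real.tendsto_exp_neg_atTop_nhds_zero.comp h1
      have h3 : Filter.Tendsto (fun b:ℝ => (C₀ * Real.exp (-ε₀*b))^2)
          Filter.atTop (nhds ((C₀ * 0)^2)) := by
        apply Filter.Tendsto.pow
        apply Filter.Tendsto.const_mul
        simpa [neg_mul] using h2
      simpa using h3
  -- the energy integral vanishes
  have hJzero : ∀ a' : ℝ, 0 < a' → a' < H → ∀ b : ℝ, H ≤ b →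
      (∫ x in a'..b, ‖V' x‖^2) = 0 := by
    intro a' ha' ha'H b hb
    have hb0 : (0:ℝ) < b := lt_of_lt_of_le hH hb
    have ha'b : a' ≤ b := le_trans (le_of_lt ha'H) hb
    have hJnn : 0 ≤ ∫ x in a'..b, ‖V' x‖^2 :=
      intervalIntegral.integral_nonneg ha'b (fun t _ => sq_nonneg _)
    have hstep1 : ∀ b' : ℝ, H ≤ b' → (∫ x in a'..b', ‖V' x‖^2) ≤ 2 * F b' := by
      intro b' hb'
      have hb'0 : (0:ℝ) < b' := lt_of_lt_of_le hH hb'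
      have ha'b' : a' ≤ b' := le_trans (le_of_lt ha'H) hb'
      apply ge_of_tendsto (f := fun a => 2*(F b' - F a) + M^2*a)
        (x := nhdsWithin (0:ℝ) (Set.Ioi 0))
      · have ht1 : Filter.Tendsto (fun a : ℝ => 2*(F b' - F a) + M^2*a)
            (nhdsWithin (0:ℝ) (Set.Ioi 0)) (nhds (2*(F b' - 0) + M^2*0)) := by
          apply Filter.Tendsto.add
          · exact (tendsto_const_nhds.sub hFa0).const_mul 2
          · exact (((continuous_const.mul continuous_id).tendsto (0:ℝ)).mono_left
              nhdsWithin_le_nhds)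
        simpa using ht1
      · have hm : (0:ℝ) < min ε (min H a') := lt_min hε (lt_min hH ha')
        filter_upwards [Ioo_mem_nhdsGT_of_mem (Set.left_mem_Ico.2 hm)] with a haa
        have ha0 : 0 < a := haa.1
        have haε : a < ε := lt_of_lt_of_le haa.2 (min_le_left _ _)
        have haH : a < H := lt_of_lt_of_le haa.2 (le_trans (min_le_right _ _) (min_le_left _ _))
        have haa' : a ≤ a' :=
          le_of_lt (lt_of_lt_of_le haa.2 (le_trans (min_le_right _ _) (min_le_right _ _)))
        have h1 := hmain a b' ha0 haε haH hb'
        have h2 : (∫ x in a'..b', ‖V' x‖^2) ≤ ∫ x in a..b', ‖V' x‖^2 := by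
          have h3 := intervalIntegral.integral_add_adjacent_intervals
            (hW2int a a' ha0 ha') (hW2int a' b' ha' hb'0)
          have h4 : 0 ≤ ∫ x in a..a', ‖V' x‖^2 :=
            intervalIntegral.integral_nonneg haa' (fun t _ => sq_nonneg _)
          linarith
        linarith
    have hstep2 : (∫ x in a'..b, ‖V' x‖^2) ≤ 0 := by
      have hlim : Filter.Tendsto (fun b' : ℝ => 2 * F b') Filter.atTop (nhds 0) := by
        have h := hFb0.const_mul (2:ℝ)
        simpa only [mul_zero] using h
      apply ge_of_tendsto hlim
      filter_upwards [Filter.eventually_ge_atTop (max H b)] with b' hb'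
      have hb'H : H ≤ b' := le_trans (le_max_left _ _) hb'
      have hbb' : b ≤ b' := le_trans (le_max_right _ _) hb'
      have hb'0 : (0:ℝ) < b' := lt_of_lt_of_le hH hb'H
      have h1 := hstep1 b' hb'H
      have h2 : (∫ x in a'..b, ‖V' x‖^2) ≤ ∫ x in a'..b', ‖V' x‖^2 := by
        have h3 := intervalIntegral.integral_add_adjacent_intervals
          (hW2int a' b ha' hb0) (hW2int b b' hb0 hb'0)
        have h4 : 0 ≤ ∫ x in b..b', ‖V' x‖^2 :=
          intervalIntegral.integral_nonneg hbb' (fun t _ => sq_nonneg _)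
        linarith
      linarith
    linarith
  -- V vanishes on the positive axis
  have hVzero : ∀ x : ℝ, 0 < x → V x = 0 := by
    intro x hx
    have hb0 : (0:ℝ) < max H x := lt_of_lt_of_le hH (le_max_left _ _)
    have hnorm_le : ∀ a : ℝ, 0 < a → a < min ε (min H x) → ‖V x‖ ≤ M * a := by
      intro a ha ham
      have haε : a < ε := lt_of_lt_of_le ham (min_le_left _ _)
      have haH : a < H := lt_of_lt_of_le ham (le_trans (min_le_right _ _) (min_le_left _ _))
      have hax : a < x := lt_of_lt_of_le ham (le_trans (min_le_right _ _) (min_le_right _ _))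
      have hJ := hJzero a ha haH (max H x) (le_max_left _ _)
      have hg2 : (∫ t in a..x, ‖V' t‖^2) = 0 := by
        have h1 := intervalIntegral.integral_add_adjacent_intervals
          (hW2int a x ha hx) (hW2int x (max H x) hx hb0)
        have h2 : 0 ≤ ∫ t in a..x, ‖V' t‖^2 :=
          intervalIntegral.integral_nonneg (le_of_lt hax) (fun t _ => sq_nonneg _)
        have h3 : 0 ≤ ∫ t in x..(max H x), ‖V' t‖^2 :=
          intervalIntegral.integral_nonneg (le_max_right _ _) (fun t _ => sq_nonneg _)
        linarith
      have hcs := cs_interval (fun t => ‖V' t‖) a x ha (le_of_lt hax) hWc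
      rw [hg2] at hcs
      have hs0 : 0 ≤ ∫ t in a..x, ‖V' t‖ :=
        intervalIntegral.integral_nonneg (le_of_lt hax) (fun t _ => norm_nonneg _)
      have hs : (∫ t in a..x, ‖V' t‖) = 0 := by nlinarith
      have h5 := hVub a x ha (le_of_lt hax)
      rw [hs] at h5
      have h6 := hVa a ha haε
      linarith
    have hlim : Filter.Tendsto (fun a : ℝ => M * a)
        (nhdsWithin (0:ℝ) (Set.Ioi 0)) (nhds 0) := by
      have hc : Continuous (fun a : ℝ => M * a) := continuous_const.mul continuous_id
      have h := (hc.tendsto (0:ℝ)).mono_left (nhdsWithin_le_nhds (s := Set.Ioi (0:ℝ)))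
      simpa using h
    have h0 : ‖V x‖ ≤ 0 := by
      apply ge_of_tendsto hlim
      have hm : (0:ℝ) < min ε (min H x) := lt_min hε (lt_min hH hx)
      filter_upwards [Ioo_mem_nhdsGT_of_mem (Set.left_mem_Ico.2 hm)] with a haa
      exact hnorm_le a haa.1 haa.2
    simpa using le_antisymm h0 (norm_nonneg _)
  have hpart1 : ∀ x : ℝ, 0 ≤ x → V x = 0 := by
    intro x hx
    rcases eq_or_lt_of_le hx with h|h
    · rw [← h]; exact hV0
    · exact hVzero x h
  refine ⟨hpart1, ?_⟩
  intro hT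
  have hV'0 : ∀ x : ℝ, 0 < x → V' x = 0 := by
    intro x hx
    have hev : (fun t => (0:ℂ)) =ᶠ[nhds x] V := by
      filter_upwards [Ioi_mem_nhds hx] with t ht
      exact (hVzero t ht).symm
    have h1 : HasDerivAt V 0 x := (hasDerivAt_const x (0:ℂ)).congr_of_eventuallyEq hev.symm
    exact (hVd x hx).unique h1
  have hT0 : Filter.Tendsto V' (nhdsWithin (0:ℝ) (Set.Ioi 0)) (nhds 0) := by
    have hev : (fun _ => (0:ℂ)) =ᶠ[nhdsWithin (0:ℝ) (Set.Ioi 0)] V' := by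
      filter_upwards [self_mem_nhdsWithin] with t ht
      exact (hV'0 t ht).symm
    exact Filter.Tendsto.congr' hev tendsto_const_nhds
  have huniq : Complex.I * (δ 0 : ℂ) = 0 := tendsto_nhds_unique hT hT0
  have hz : (δ 0 : ℂ) = 0 := by
    rcases mul_eq_zero.1 huniq with h|h
    · exact absurd h Complex.I_ne_zero
    · exact h
  exact hδ0 (by exact_mod_cast hz)
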